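/- Let μ, κ > 0 and let h : ℝ → [0,∞) satisfy h(z) ≥ h(0) > 0 for every z ∈ ℝ. Then there exists a constant c > 0 such that for every z ∈ [0,1] and all symmetric 2×2 real matrices E₁, E₂ one has (∂_E W(z,E₁) − ∂_E W(z,E₂)) : (E₁ − E₂) ≥ c |E₁ − E₂|². -/
import Mathlib


open Matrix

/-- Volumetric part of a 2×2 matrix: `((tr F)/2) • I`. -/
noncomputable def Mvol (F : Matrix (Fin 2) (Fin 2) ℝ) : Matrix (Fin 2) (Fin 2) ℝ :=
  (Matrix.trace F / 2) • (1 : Matrix (Fin 2) (Fin 2) ℝ)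

/-- Deviatoric part of a 2×2 matrix: `F - F_v`. -/
noncomputable def Mdev (F : Matrix (Fin 2) (Fin 2) ℝ) : Matrix (Fin 2) (Fin 2) ℝ :=
  F - Mvol F

/-- Tensile volumetric part: `((tr F)_plus / 2) • I`. -/
noncomputable def MvolP (F : Matrix (Fin 2) (Fin 2) ℝ) : Matrix (Fin 2) (Fin 2) ℝ :=
  (max (Matrix.trace F) 0 / 2) • (1 : Matrix (Fin 2) (Fin 2) ℝ)

/-- Compressive volumetric part: `((tr F)_minus / 2) • I`. -/
noncomputable def MvolM (F : Matrix (Fin 2) (Fin 2) ℝ) : Matrix (Fin 2) (Fin 2) ℝ :=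
  (max (-(Matrix.trace F)) 0 / 2) • (1 : Matrix (Fin 2) (Fin 2) ℝ)

/-- Frobenius inner product `A : B := tr(Aᵀ B)`. -/
noncomputable def mInner (A B : Matrix (Fin 2) (Fin 2) ℝ) : ℝ := Matrix.trace (Aᵀ * B)

/-- Frobenius norm. -/
noncomputable def fnorm (A : Matrix (Fin 2) (Fin 2) ℝ) : ℝ := Real.sqrt (mInner A A)

/-- Elastic energy density with tension–compression splitting:
`W(z,E) = h(z)(μ|E_d|² + κ|E_v⁺|²) + κ|E_v⁻|²`. -/
noncomputable def W (mu kappa : ℝ) (h : ℝ → ℝ) (z : ℝ)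
    (E : Matrix (Fin 2) (Fin 2) ℝ) : ℝ :=
  h z * (mu * fnorm (Mdev E) ^ 2 + kappa * fnorm (MvolP E) ^ 2) +
    kappa * fnorm (MvolM E) ^ 2

/-- The stress `∂_E W(z,E) = 2h(z)(μ E_d + κ E_v⁺) - 2κ E_v⁻`. -/
noncomputable def dW (mu kappa : ℝ) (h : ℝ → ℝ) (z : ℝ)
    (E : Matrix (Fin 2) (Fin 2) ℝ) : Matrix (Fin 2) (Fin 2) ℝ :=
  (2 * h z) • (mu • Mdev E + kappa • MvolP E) - (2 * kappa) • MvolM E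

/-- The partial derivative `∂_z W(z,E) = h'(z)(μ|E_d|² + κ|E_v⁺|²)`. -/
noncomputable def dzW (mu kappa : ℝ) (h : ℝ → ℝ) (z : ℝ)
    (E : Matrix (Fin 2) (Fin 2) ℝ) : ℝ :=
  deriv h z * (mu * fnorm (Mdev E) ^ 2 + kappa * fnorm (MvolP E) ^ 2)


lemma key_real (mu kappa H h0 a b d t₁ t₂ : ℝ) (hmu : 0 < mu) (hk : 0 < kappa)
    (hH : h0 ≤ H) (h0p : 0 < h0) (ht : t₁ - t₂ = a + d) :
    2*H*mu*(a - (a+d)/2)*a + 4*H*mu*b^2 + 2*H*mu*(d - (a+d)/2)*d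
      + (H*kappa*(max t₁ 0 - max t₂ 0) - kappa*(max (-t₁) 0 - max (-t₂) 0))*(a+d)
      ≥ min (2*mu*h0) (kappa * min h0 1) * (a^2 + 2*b^2 + d^2) := by
  set p := max t₁ 0 - max t₂ 0 with hp
  set q := max (-t₁) 0 - max (-t₂) 0 with hq
  have hpq : p * q ≤ 0 := by
    rcases le_total t₁ 0 with h1 | h1 <;> rcases le_total t₂ 0 with h2 | h2 <;>
      simp [hp, hq, max_eq_left, max_eq_right, *] <;> nlinarith
  have hs : p - q = a + d := by
    have e1 : max t₁ 0 - max (-t₁) 0 = t₁ := by rcases le_total t₁ 0 with h1 | h1 <;> simp [*] <;> linarith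
    have e2 : max t₂ 0 - max (-t₂) 0 = t₂ := by rcases le_total t₂ 0 with h1 | h1 <;> simp [*] <;> linarith
    rw [hp, hq]; linarith
  set m := min (2*mu*h0) (kappa * min h0 1) with hm
  have hm1 : m ≤ 2*mu*h0 := min_le_left _ _
  have hm2 : m ≤ kappa * h0 := le_trans (min_le_right _ _) (by nlinarith [min_le_left h0 (1:ℝ)])
  have hm3 : m ≤ kappa := le_trans (min_le_right _ _) (by nlinarith [min_le_right h0 (1:ℝ)])
  have hm0 : 0 ≤ m := le_min (by positivity) (by positivity)
  have hHm : 0 ≤ H := le_trans h0p.le hH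
  clear_value p q m
  -- Term B bound
  have hB : (H*kappa*p - kappa*q)*(a+d) ≥ m * (a+d)^2 / 2 := by
    have : (H*kappa*p - kappa*q)*(p-q) ≥ kappa*(h0*p^2 + q^2) := by
      nlinarith [mul_nonneg (mul_nonneg hk.le (by linarith : (0:ℝ) ≤ 1 + H)) (neg_nonneg.mpr hpq),
        mul_le_mul_of_nonneg_right hH (sq_nonneg p), hk.le]
    have h2 : kappa*(h0*p^2 + q^2) ≥ m * (p-q)^2 / 2 := by
      nlinarith [mul_nonneg hm0 (sq_nonneg (p+q)),
        mul_nonneg (by linarith : (0:ℝ) ≤ kappa*h0 - m) (sq_nonneg p),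
        mul_nonneg (by linarith : (0:ℝ) ≤ kappa - m) (sq_nonneg q)]
    rw [← hs]
    linarith
  nlinarith [mul_le_mul_of_nonneg_right (mul_le_mul_of_nonneg_left hH hmu.le) (sq_nonneg (a-d)),
    mul_le_mul_of_nonneg_right (mul_le_mul_of_nonneg_left hH hmu.le) (sq_nonneg b), sq_nonneg (a-d)]

lemma mInner_expand (A B : Matrix (Fin 2) (Fin 2) ℝ) :
    mInner A B = A 0 0 * B 0 0 + A 0 1 * B 0 1 + A 1 0 * B 1 0 + A 1 1 * B 1 1 := by
  simp [mInner, Matrix.trace_fin_two, Matrix.mul_apply, Fin.sum_univ_two, Matrix.transpose_apply]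
  ring

lemma fnorm_sq (A : Matrix (Fin 2) (Fin 2) ℝ) : fnorm A ^ 2 = mInner A A := by
  rw [fnorm, Real.sq_sqrt]
  rw [mInner_expand]
  nlinarith [mul_self_nonneg (A 0 0), mul_self_nonneg (A 0 1), mul_self_nonneg (A 1 0), mul_self_nonneg (A 1 1)]
/-- strong monotonicity of the stress: there is `c > 0` with
`(∂_E W(z,E₁) - ∂_E W(z,E₂)) : (E₁ - E₂) ≥ c|E₁ - E₂|²` for all `z ∈ [0,1]`
and symmetric `E₁`, `E₂`. -/
theorem stress_strongly_monotone (mu kappa : ℝ) (hmu : 0 < mu) (hkappa : 0 < kappa)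
    (h : ℝ → ℝ) (hh : ∀ z, h 0 ≤ h z) (hh0 : 0 < h 0) :
    ∃ c > 0, ∀ z ∈ Set.Icc (0 : ℝ) 1, ∀ E₁ E₂ : Matrix (Fin 2) (Fin 2) ℝ,
      E₁ᵀ = E₁ → E₂ᵀ = E₂ →
      mInner (dW mu kappa h z E₁ - dW mu kappa h z E₂) (E₁ - E₂) ≥
        c * fnorm (E₁ - E₂) ^ 2 := by
  refine ⟨min (2*mu*(h 0)) (kappa * min (h 0) 1),
    lt_min (mul_pos (by positivity) hh0) (mul_pos hkappa (lt_min hh0 one_pos)),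
    fun z _ E₁ E₂ hs1 hs2 => ?_⟩
  have h1 : E₁ 1 0 = E₁ 0 1 := by conv_lhs => rw [← hs1, Matrix.transpose_apply]
  have h2 : E₂ 1 0 = E₂ 0 1 := by conv_lhs => rw [← hs2, Matrix.transpose_apply]
  rw [fnorm_sq, mInner_expand, mInner_expand]
  have key := key_real mu kappa (h z) (h 0) (E₁ 0 0 - E₂ 0 0) (E₁ 0 1 - E₂ 0 1)
    (E₁ 1 1 - E₂ 1 1) (Matrix.trace E₁) (Matrix.trace E₂) hmu hkappa (hh z) hh0
    (by simp [Matrix.trace_fin_two]; ring)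
  simp only [dW, Mdev, Mvol, MvolP, MvolM, Matrix.sub_apply, Matrix.add_apply,
    Matrix.smul_apply, Matrix.one_apply, Matrix.trace_fin_two, smul_eq_mul] at *
  rw [h1, h2]
  norm_num
  ring_nf at key ⊢
  nlinarith [key]
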